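/- arXiv:1608.01938 — 4 statements merged into one kernel-verified Lean document; each statement's English description precedes it below -/
import Mathlib

section
/- Let 0 < c < 1, C > 0, and 0 < c' < c/2. For each n, let M_n be a random n × n real symmetric matrix with integer entries such that: (a) for every real number r, the probability that r is an eigenvalue of M_n is at most 2·exp(−n^c); and (b) the probability that M_n has an eigenvalue of absolute value exceeding C√n is at most 2·exp(−n). Then for all sufficiently large n, the probability that M_n has an eigenvalue that is algebraic of degree at most n^(c') is at most exp(−n^c / 2). -/
open MeasureTheory Polynomial Filter Matrix

lemma aux_root_real {n : ℕ} (A : Matrix (Fin n) (Fin n) ℤ) (hA : A.IsSymm) (z : ℂ)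
    (hz : Polynomial.aeval z A.charpoly = 0) : ∃ r : ℝ, z = (r : ℂ) := by
  set B : Matrix (Fin n) (Fin n) ℂ := A.map (Int.cast : ℤ → ℂ) with hBdef
  have hBherm : B.IsHermitian := by
    ext i j
    simp only [conjTranspose_apply, hBdef, map_apply, star_intCast]
    rw [← hA.apply i j]
  have hdet : ((z • (1 : Matrix (Fin n) (Fin n) ℂ)) - B).det = 0 := by
    have h1 : Polynomial.eval z (B.charpoly) = 0 := by
      have hmap : B.charpoly = A.charpoly.map (Int.castRingHom ℂ) :=
        Matrix.charpoly_map A (Int.castRingHom ℂ)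
      rw [hmap, ← Polynomial.eval₂_eq_eval_map]
      simpa [Polynomial.aeval_def] using hz
    have h2 : Polynomial.eval z (B.charpoly)
        = ((charmatrix B).map (Polynomial.evalRingHom z)).det := by
      rw [Matrix.charpoly]
      exact RingHom.map_det (Polynomial.evalRingHom z) (charmatrix B)
    have h3 : (charmatrix B).map (Polynomial.evalRingHom z)
        = (z • (1 : Matrix (Fin n) (Fin n) ℂ)) - B := by
      ext i j
      by_cases h : i = j
      · subst h
        simp [charmatrix_apply_eq, Matrix.sub_apply, Matrix.smul_apply, Matrix.one_apply]
      · simp [charmatrix_apply_ne _ _ _ h, Matrix.sub_apply, Matrix.smul_apply,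
          Matrix.one_apply, h]
    rw [← h3, ← h2, h1]
  obtain ⟨v, hv0, hv⟩ := (Matrix.exists_mulVec_eq_zero_iff).mpr hdet
  have key : B *ᵥ v = z • v := by
    rw [Matrix.sub_mulVec, sub_eq_zero, Matrix.smul_mulVec, Matrix.one_mulVec] at hv
    exact hv.symm
  set t : ℂ := star v ⬝ᵥ v with htdef
  have htreal : t = ((∑ i, Complex.normSq (v i) : ℝ) : ℂ) := by
    rw [htdef, dotProduct]
    push_cast
    refine Finset.sum_congr rfl fun i _ => ?_
    rw [Pi.star_apply, Complex.star_def, mul_comm, Complex.mul_conj]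
  have ht0 : t ≠ 0 := by
    rw [htreal]
    intro h
    apply hv0
    have hsum : (∑ i, Complex.normSq (v i) : ℝ) = 0 := by exact_mod_cast h
    funext i
    have := (Finset.sum_eq_zero_iff_of_nonneg
      (fun j _ => Complex.normSq_nonneg (v j))).mp hsum i (Finset.mem_univ i)
    exact Complex.normSq_eq_zero.mp this
  have htstar : star t = t := by
    rw [htreal]
    exact Complex.conj_ofReal _
  set s : ℂ := star v ⬝ᵥ (B *ᵥ v) with hsdef
  have h1 : s = z * t := by
    rw [hsdef, key, dotProduct_smul, smul_eq_mul]
  have e1 : s = star (star (B *ᵥ v) ⬝ᵥ v) := Matrix.star_dotProduct _ _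
  have e2 : star (B *ᵥ v) ⬝ᵥ v = s := by
    rw [Matrix.star_mulVec, ← Matrix.dotProduct_mulVec, hBherm.eq]
  have h2 : star s = s := by
    conv_rhs => rw [e1, e2]
  have h3 : (starRingEnd ℂ) z * t = z * t := by
    calc (starRingEnd ℂ) z * t = star z * star t := by rw [htstar]; rfl
      _ = star (t * z) := by rw [StarMul.star_mul t z]
      _ = star (z * t) := by rw [mul_comm]
      _ = star s := by rw [h1]
      _ = s := h2
      _ = z * t := h1
  have h4 : (starRingEnd ℂ) z = z := mul_right_cancel₀ ht0 h3
  exact ⟨z.re, (Complex.conj_eq_iff_re.mp h4).symm⟩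

lemma aux_choose_le_two_pow (D k : ℕ) : D.choose k ≤ 2 ^ D := by
  by_cases h : k ≤ D
  · calc D.choose k ≤ ∑ i ∈ Finset.range (D+1), D.choose i :=
        Finset.single_le_sum (fun i _ => Nat.zero_le _)
          (Finset.mem_range.mpr (Nat.lt_succ_of_le h))
      _ = 2 ^ D := Nat.sum_range_choose D
  · rw [Nat.choose_eq_zero_of_lt (lt_of_not_ge h)]
    exact Nat.zero_le _

noncomputable def toPoly (D : ℕ) (f : Fin (D+1) → ℤ) : Polynomial ℤ :=
  ∑ i : Fin (D+1), Polynomial.C (f i) * Polynomial.X ^ (i : ℕ)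

noncomputable def polyBox (D B : ℕ) : Finset (Polynomial ℤ) :=
  (Fintype.piFinset fun _ : Fin (D+1) => Finset.Icc (-(B:ℤ)) (B:ℤ)).image (toPoly D)

noncomputable def rootsF (p : Polynomial ℤ) : Finset ℝ :=
  (p.map (Int.castRingHom ℝ)).roots.toFinset

lemma mem_polyBox {D B : ℕ} {q : Polynomial ℤ} (h1 : q.natDegree ≤ D)
    (h2 : ∀ i, |q.coeff i| ≤ (B:ℤ)) : q ∈ polyBox D B := by
  rw [polyBox, Finset.mem_image]
  refine ⟨fun i => q.coeff i, ?_, ?_⟩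
  · rw [Fintype.mem_piFinset]
    intro i
    rw [Finset.mem_Icc, ← abs_le]
    exact h2 i
  · rw [toPoly]
    have := (Polynomial.as_sum_range' q (D+1) (Nat.lt_succ_of_le h1)).symm
    rw [Fin.sum_univ_eq_sum_range (fun i => Polynomial.C (q.coeff i) * Polynomial.X ^ i)]
    simpa only [Polynomial.C_mul_X_pow_eq_monomial] using this

lemma card_polyBox (D B : ℕ) : (polyBox D B).card ≤ (2*B+1)^(D+1) := by
  refine (Finset.card_image_le).trans ?_
  rw [Fintype.card_piFinset]
  refine le_of_eq ?_
  rw [Finset.prod_const, Int.card_Icc]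
  congr 1
  · omega
  · simp [Fintype.card_fin]

lemma natDegree_of_mem_polyBox {D B : ℕ} {p : Polynomial ℤ} (h : p ∈ polyBox D B) :
    p.natDegree ≤ D := by
  rw [polyBox, Finset.mem_image] at h
  obtain ⟨f, _, rfl⟩ := h
  refine Polynomial.natDegree_sum_le_of_forall_le _ _ fun i _ => ?_
  exact (Polynomial.natDegree_C_mul_X_pow_le _ _).trans (Nat.le_of_lt_succ i.isLt)

lemma card_rootsF {p : Polynomial ℤ} : (rootsF p).card ≤ p.natDegree := by
  refine (Multiset.toFinset_card_le _).trans ?_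
  refine (Polynomial.card_roots' _).trans ?_
  exact Polynomial.natDegree_map_le

lemma aux_candidate {n D B : ℕ} (A : Matrix (Fin n) (Fin n) ℤ) (hA : A.IsSymm)
    (R : ℝ)
    (hgood : ∀ w : ℂ, Polynomial.aeval w A.charpoly = 0 → ‖w‖ ≤ R)
    (z : ℂ) (hz : Polynomial.aeval z A.charpoly = 0)
    (hdeg : (minpoly ℚ z).natDegree ≤ D)
    (hB : max R 1 ^ D * (D.choose (D/2) : ℕ) ≤ (B:ℝ)) :
    ∃ p ∈ polyBox D B, ∃ r ∈ rootsF p, z = (r : ℂ) := by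
  obtain ⟨r, rfl⟩ := aux_root_real A hA z hz
  -- real root of charpoly
  have haevalr : Polynomial.aeval r A.charpoly = 0 := by
    have h2 : algebraMap ℝ ℂ (Polynomial.aeval r A.charpoly) = 0 := by
      rw [← Polynomial.aeval_algebraMap_apply]
      simpa using hz
    exact (map_eq_zero_iff _ (algebraMap ℝ ℂ).injective).mp h2
  have hri : IsIntegral ℤ r :=
    ⟨A.charpoly, A.charpoly_monic, by rw [← Polynomial.aeval_def]; exact haevalr⟩
  set q : Polynomial ℤ := minpoly ℤ r with hqdef
  have hq_monic : q.Monic := minpoly.monic hri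
  have hq_dvd : q ∣ A.charpoly := minpoly.isIntegrallyClosed_dvd hri haevalr
  -- degree bound
  have hqdeg : q.natDegree ≤ D := by
    have e1 : minpoly ℚ ((r : ℂ)) = minpoly ℚ r :=
      minpoly.algebraMap_eq (algebraMap ℝ ℂ).injective r
    have e2 : minpoly ℚ r = q.map (algebraMap ℤ ℚ) :=
      minpoly.isIntegrallyClosed_eq_field_fractions ℚ ℝ hri
    have e3 : (q.map (algebraMap ℤ ℚ)).natDegree = q.natDegree :=
      Polynomial.natDegree_map_eq_of_injective (algebraMap ℤ ℚ).injective_int q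
    rw [e1, e2, e3] at hdeg
    exact hdeg
  -- roots of q are bounded by R
  have hroots : ∀ w ∈ (q.map (Int.castRingHom ℂ)).roots, ‖w‖ ≤ R := by
    intro w hw
    have hw0 : Polynomial.aeval w q = 0 := by
      have := (Polynomial.mem_roots'.mp hw).2
      rwa [Polynomial.IsRoot, Polynomial.eval_map, ← algebraMap_int_eq,
        ← Polynomial.aeval_def] at this
    obtain ⟨u, hu⟩ := hq_dvd
    have : Polynomial.aeval w A.charpoly = 0 := by
      rw [hu, _root_.map_mul, hw0, zero_mul]
    exact hgood w this
  -- coefficient bound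
  have hq_coeff : ∀ i, |q.coeff i| ≤ (B:ℤ) := by
    intro i
    have hsplits : (q.map (Int.castRingHom ℂ)).Splits :=
      IsAlgClosed.splits _
    have hc := Polynomial.coeff_bdd_of_roots_le (Int.castRingHom ℂ) hq_monic
      hsplits hqdeg hroots i
    have hcc : ‖(q.map (Int.castRingHom ℂ)).coeff i‖ = |(q.coeff i : ℝ)| := by
      rw [Polynomial.coeff_map]
      simp [Complex.norm_intCast]
    rw [hcc] at hc
    have : |(q.coeff i : ℝ)| ≤ (B:ℝ) := hc.trans hB
    exact_mod_cast this
  refine ⟨q, mem_polyBox hqdeg hq_coeff, r, ?_, rfl⟩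
  rw [rootsF, Multiset.mem_toFinset, Polynomial.mem_roots']
  refine ⟨(Polynomial.map_ne_zero_iff (Int.castRingHom ℝ).injective_int).mpr
      (minpoly.ne_zero hri), ?_⟩
  rw [Polynomial.IsRoot, Polynomial.eval_map, ← algebraMap_int_eq, ← Polynomial.aeval_def]
  exact minpoly.aeval ℤ r

set_option maxHeartbeats 1000000 in
/-- If a random `n × n` symmetric integer matrix satisfies the pointwise delocalization
bound `ℙ(r is an eigenvalue) ≤ 2 exp(-n^c)` for every real `r`, and its eigenvalues all lie
in `{|z| ≤ C √n}` except with probability `2 exp(-n)`, then for all sufficiently large `n`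
the probability that it has an eigenvalue that is algebraic of degree at most `n^(c')` is
at most `exp(-n^c / 2)`. -/
theorem symmetric_matrix_low_degree_eigenvalues
    (c C c' : ℝ) (hc0 : 0 < c) (hc1 : c < 1) (hC : 0 < C) (hc'0 : 0 < c') (hc' : c' < c / 2)
    {α : Type*} [MeasurableSpace α] (P : Measure α) [IsProbabilityMeasure P]
    (M : (n : ℕ) → α → Matrix (Fin n) (Fin n) ℤ)
    (hsymm : ∀ n ω, (M n ω).IsSymm)
    (hdeloc : ∀ n : ℕ, ∀ r : ℝ,
      (P {ω | Polynomial.aeval (r : ℂ) (Matrix.charpoly (M n ω)) = 0}).toReal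
        ≤ 2 * Real.exp (-(n : ℝ) ^ c))
    (hbound : ∀ n : ℕ,
      (P {ω | ∃ z : ℂ, Polynomial.aeval z (Matrix.charpoly (M n ω)) = 0 ∧
          C * Real.sqrt n < ‖z‖}).toReal ≤ 2 * Real.exp (-(n : ℝ))) :
    ∃ N : ℕ, ∀ n : ℕ, N ≤ n →
      (P {ω | ∃ z : ℂ, Polynomial.aeval z (Matrix.charpoly (M n ω)) = 0 ∧
          IsAlgebraic ℚ z ∧
          ((minpoly ℚ z).natDegree : ℝ) ≤ (n : ℝ) ^ c'}).toReal
        ≤ Real.exp (-(n : ℝ) ^ c / 2) := by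
  classical
  set ε : ℝ := (c - 2*c')/2 with hεdef
  have hε : 0 < ε := by rw [hεdef]; linarith
  set K1 : ℝ := (2*(C+1))^ε / ε with hK1def
  have hK1pos : 0 < K1 := div_pos (Real.rpow_pos_of_pos (by linarith) ε) hε
  -- eventual conditions
  have tc : Tendsto (fun n : ℕ => ((n:ℝ))^c) atTop atTop :=
    (tendsto_rpow_atTop hc0).comp tendsto_natCast_atTop_atTop
  have tε : Tendsto (fun n : ℕ => ((n:ℝ))^ε) atTop atTop :=
    (tendsto_rpow_atTop hε).comp tendsto_natCast_atTop_atTop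
  have tn : Tendsto (fun n : ℕ => ((n:ℝ))) atTop atTop := tendsto_natCast_atTop_atTop
  have hev : ∀ᶠ n : ℕ in atTop, (1 ≤ n ∧ 4 * Real.log 4 ≤ ((n:ℝ))^c) ∧
      (2 * Real.log 4 ≤ ((n:ℝ)) ∧ 4*(4+3*K1) ≤ ((n:ℝ))^ε) :=
    ((eventually_ge_atTop 1).and (tc.eventually_ge_atTop _)).and
      ((tn.eventually_ge_atTop _).and (tε.eventually_ge_atTop _))
  obtain ⟨N, hN⟩ := Filter.eventually_atTop.mp hev
  refine ⟨N, fun n hn => ?_⟩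
  obtain ⟨⟨hn1, hC2⟩, hC3, hC4⟩ := hN n hn
  have hn1R : (1:ℝ) ≤ (n:ℝ) := by exact_mod_cast hn1
  have hnpos : (0:ℝ) < (n:ℝ) := by linarith
  have hnc'1 : 1 ≤ ((n:ℝ))^c' := Real.one_le_rpow hn1R hc'0.le
  have hnε1 : 1 ≤ ((n:ℝ))^ε := Real.one_le_rpow hn1R hε.le
  set D : ℕ := ⌊((n:ℝ))^c'⌋₊ with hDdef
  have hD1 : 1 ≤ D := Nat.le_floor (by exact_mod_cast hnc'1)
  have hDle : (D:ℝ) ≤ ((n:ℝ))^c' := Nat.floor_le (by positivity)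
  set R : ℝ := C * Real.sqrt n with hRdef
  have hR0 : (0:ℝ) ≤ R := by positivity
  set Rb : ℝ := max R 1 with hRbdef
  have hRb1 : (1:ℝ) ≤ Rb := le_max_right _ _
  set K : ℝ := (2*Rb)^D with hKdef
  have hKone : (1:ℝ) ≤ K := one_le_pow₀ (by linarith)
  set B : ℕ := ⌈K⌉₊ with hBdef
  have hKB : K ≤ (B:ℝ) := Nat.le_ceil K
  have hBbound : max R 1 ^ D * ((D.choose (D/2) : ℕ) : ℝ) ≤ (B:ℝ) := by
    refine le_trans ?_ hKB
    rw [hKdef, mul_pow]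
    have hch : ((D.choose (D/2) : ℕ) : ℝ) ≤ (2:ℝ)^D := by
      exact_mod_cast aux_choose_le_two_pow D (D/2)
    calc max R 1 ^ D * ((D.choose (D/2) : ℕ) : ℝ) ≤ max R 1 ^ D * (2:ℝ)^D := by
          refine mul_le_mul_of_nonneg_left hch (by positivity)
      _ = (2:ℝ)^D * Rb^D := by rw [hRbdef, mul_comm]
  -- the union bound
  have hsub : {ω | ∃ z : ℂ, Polynomial.aeval z (Matrix.charpoly (M n ω)) = 0 ∧
      IsAlgebraic ℚ z ∧ ((minpoly ℚ z).natDegree : ℝ) ≤ (n : ℝ) ^ c'} ⊆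
      {ω | ∃ z : ℂ, Polynomial.aeval z (Matrix.charpoly (M n ω)) = 0 ∧
          C * Real.sqrt n < ‖z‖} ∪
      ⋃ p ∈ polyBox D B, ⋃ r ∈ rootsF p,
        {ω | Polynomial.aeval ((r:ℝ) : ℂ) (Matrix.charpoly (M n ω)) = 0} := by
    intro ω hω
    by_cases hb : ω ∈ {ω | ∃ z : ℂ, Polynomial.aeval z (Matrix.charpoly (M n ω)) = 0 ∧
        C * Real.sqrt n < ‖z‖}
    · exact Or.inl hb
    right
    obtain ⟨z, hz, _halg, hdeg⟩ := hω
    have hgood : ∀ w : ℂ, Polynomial.aeval w (Matrix.charpoly (M n ω)) = 0 →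
        ‖w‖ ≤ R := by
      intro w hw
      by_contra hlt
      exact hb ⟨w, hw, lt_of_not_ge hlt⟩
    have hdegD : (minpoly ℚ z).natDegree ≤ D := Nat.le_floor hdeg
    obtain ⟨p, hp, r, hr, rfl⟩ :=
      aux_candidate (M n ω) (hsymm n ω) R hgood z hz hdegD hBbound
    exact Set.mem_biUnion hp (Set.mem_biUnion hr hz)
  have step1 : P {ω | ∃ z : ℂ, Polynomial.aeval z (Matrix.charpoly (M n ω)) = 0 ∧
      IsAlgebraic ℚ z ∧ ((minpoly ℚ z).natDegree : ℝ) ≤ (n : ℝ) ^ c'} ≤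
      P {ω | ∃ z : ℂ, Polynomial.aeval z (Matrix.charpoly (M n ω)) = 0 ∧
          C * Real.sqrt n < ‖z‖} +
      ∑ p ∈ polyBox D B, ∑ r ∈ rootsF p,
        P {ω | Polynomial.aeval ((r:ℝ) : ℂ) (Matrix.charpoly (M n ω)) = 0} := by
    refine (measure_mono hsub).trans ?_
    refine (measure_union_le _ _).trans ?_
    refine add_le_add le_rfl ?_
    refine (measure_biUnion_finset_le _ _).trans ?_
    exact Finset.sum_le_sum fun p _ => measure_biUnion_finset_le _ _
  have hPfin : ∀ s : Set α, P s ≠ ⊤ := fun s => measure_ne_top P s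
  have step2 : (P {ω | ∃ z : ℂ, Polynomial.aeval z (Matrix.charpoly (M n ω)) = 0 ∧
      IsAlgebraic ℚ z ∧ ((minpoly ℚ z).natDegree : ℝ) ≤ (n : ℝ) ^ c'}).toReal ≤
      (P {ω | ∃ z : ℂ, Polynomial.aeval z (Matrix.charpoly (M n ω)) = 0 ∧
          C * Real.sqrt n < ‖z‖}).toReal +
      ∑ p ∈ polyBox D B, ∑ r ∈ rootsF p,
        (P {ω | Polynomial.aeval ((r:ℝ) : ℂ) (Matrix.charpoly (M n ω)) = 0}).toReal := by
    have hrhs : (P {ω | ∃ z : ℂ, Polynomial.aeval z (Matrix.charpoly (M n ω)) = 0 ∧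
          C * Real.sqrt n < ‖z‖} +
        ∑ p ∈ polyBox D B, ∑ r ∈ rootsF p,
          P {ω | Polynomial.aeval ((r:ℝ) : ℂ) (Matrix.charpoly (M n ω)) = 0}) ≠ ⊤ := by
      refine ENNReal.add_ne_top.mpr ⟨hPfin _, ?_⟩
      refine (ENNReal.sum_lt_top.mpr fun p _ => ?_).ne
      exact ENNReal.sum_lt_top.mpr fun r _ => (hPfin _).lt_top
    refine (ENNReal.toReal_mono hrhs step1).trans (le_of_eq ?_)
    rw [ENNReal.toReal_add (hPfin _) (by
      refine (ENNReal.sum_lt_top.mpr fun p _ => ?_).ne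
      exact ENNReal.sum_lt_top.mpr fun r _ => (hPfin _).lt_top),
      ENNReal.toReal_sum (fun p _ => by
        refine (ENNReal.sum_lt_top.mpr fun r _ => ?_).ne
        exact (hPfin _).lt_top)]
    congr 1
    exact Finset.sum_congr rfl fun p _ =>
      ENNReal.toReal_sum fun r _ => hPfin _
  -- bound the double sum
  have hsum : ∑ p ∈ polyBox D B, ∑ r ∈ rootsF p,
      (P {ω | Polynomial.aeval ((r:ℝ) : ℂ) (Matrix.charpoly (M n ω)) = 0}).toReal
      ≤ ((2*B+1 : ℝ))^(D+1) * (D:ℝ) * (2 * Real.exp (-((n:ℝ))^c)) := by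
    have hexp0 : (0:ℝ) ≤ 2 * Real.exp (-((n:ℝ))^c) := by positivity
    calc ∑ p ∈ polyBox D B, ∑ r ∈ rootsF p,
        (P {ω | Polynomial.aeval ((r:ℝ) : ℂ) (Matrix.charpoly (M n ω)) = 0}).toReal
        ≤ ∑ _p ∈ polyBox D B, (D:ℝ) * (2 * Real.exp (-((n:ℝ))^c)) := by
          refine Finset.sum_le_sum fun p hp => ?_
          calc ∑ r ∈ rootsF p,
              (P {ω | Polynomial.aeval ((r:ℝ) : ℂ) (Matrix.charpoly (M n ω)) = 0}).toReal
              ≤ ∑ _r ∈ rootsF p, (2 * Real.exp (-((n:ℝ))^c)) :=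
                Finset.sum_le_sum fun r _ => hdeloc n r
            _ = ((rootsF p).card : ℝ) * (2 * Real.exp (-((n:ℝ))^c)) := by
                rw [Finset.sum_const, nsmul_eq_mul]
            _ ≤ (D:ℝ) * (2 * Real.exp (-((n:ℝ))^c)) := by
                refine mul_le_mul_of_nonneg_right ?_ hexp0
                exact_mod_cast card_rootsF.trans (natDegree_of_mem_polyBox hp)
      _ = ((polyBox D B).card : ℝ) * ((D:ℝ) * (2 * Real.exp (-((n:ℝ))^c))) := by
          rw [Finset.sum_const, nsmul_eq_mul]
      _ ≤ ((2*B+1 : ℝ))^(D+1) * ((D:ℝ) * (2 * Real.exp (-((n:ℝ))^c))) := by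
          refine mul_le_mul_of_nonneg_right ?_ (by positivity)
          have := card_polyBox D B
          calc ((polyBox D B).card : ℝ) ≤ (((2*B+1)^(D+1) : ℕ) : ℝ) := by exact_mod_cast this
            _ = ((2*B+1 : ℝ))^(D+1) := by push_cast; ring
      _ = ((2*B+1 : ℝ))^(D+1) * (D:ℝ) * (2 * Real.exp (-((n:ℝ))^c)) := by ring
  -- the counting estimate : T ≤ exp(n^c/4)
  have hlogLn : Real.log (2*(C+1)*(n:ℝ)) ≤ K1 * ((n:ℝ))^ε := by
    refine (Real.log_le_rpow_div (by positivity) hε).trans ?_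
    rw [Real.mul_rpow (by positivity) (by positivity), hK1def]
    rw [div_mul_eq_mul_div, mul_comm ((2*(C+1))^ε) (((n:ℝ))^ε), mul_div_assoc, mul_comm]
  have hsqrt : Real.sqrt n ≤ (n:ℝ) := by
    nlinarith [Real.sq_sqrt hnpos.le, Real.sqrt_nonneg (n:ℝ)]
  have hRb_le : 2*Rb ≤ 2*(C+1)*(n:ℝ) := by
    rw [hRbdef, hRdef]
    have h1 : C * Real.sqrt n ≤ (C+1)*(n:ℝ) := by nlinarith
    have h2 : (1:ℝ) ≤ (C+1)*(n:ℝ) := by nlinarith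
    have := max_le h1 h2
    linarith
  have hlog2Rb : Real.log (2*Rb) ≤ K1 * ((n:ℝ))^ε :=
    (Real.log_le_log (by linarith) hRb_le).trans hlogLn
  have hlogn : Real.log (n:ℝ) ≤ K1 * ((n:ℝ))^ε := by
    refine (Real.log_le_log hnpos (by nlinarith)).trans hlogLn
  have hlog50 : Real.log 5 ≤ 2 := by
    rw [Real.log_le_iff_le_exp (by norm_num)]
    have h := Real.exp_one_gt_d9
    have h2 : Real.exp 2 = Real.exp 1 * Real.exp 1 := by
      rw [← Real.exp_add]; norm_num
    nlinarith
  have hlogK : Real.log K = (D:ℝ) * Real.log (2*Rb) := by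
    rw [hKdef, Real.log_pow]
  have hDn : (D:ℝ) + 1 ≤ 2 * ((n:ℝ))^c' := by linarith
  have hB_le : (B:ℝ) ≤ K + 1 := (Nat.ceil_lt_add_one (by positivity)).le
  have h2B1 : (2*(B:ℝ)+1) ≤ 5*K := by linarith
  have hTle : ((2*B+1 : ℝ))^(D+1) * (D:ℝ) ≤ (5*K)^(D+1) * ((n:ℝ))^c' := by
    push_cast
    refine mul_le_mul (pow_le_pow_left₀ (by positivity) (by push_cast; linarith) _)
      hDle (by positivity) (by positivity)
  have hexps : ∀ a : ℝ, a ≤ c - ε → 0 ≤ a → ((n:ℝ))^a ≤ ((n:ℝ))^(c-ε) := fun a ha _ =>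
    Real.rpow_le_rpow_of_exponent_le hn1R ha
  have hcε : c - ε = 2*c' + ε := by rw [hεdef]; ring
  have hlogT : Real.log ((5*K)^(D+1) * ((n:ℝ))^c') ≤ (4+3*K1) * ((n:ℝ))^(c-ε) := by
    have hKpos : (0:ℝ) < K := by linarith
    rw [Real.log_mul (by positivity) (by positivity), Real.log_pow,
      Real.log_mul (by norm_num) (by linarith), hlogK, Real.log_rpow hnpos]
    have e1 : ((D:ℝ)+1) * (Real.log 5 + (D:ℝ) * Real.log (2*Rb)) + c' * Real.log (n:ℝ)
        ≤ (2*((n:ℝ))^c') * (2*((n:ℝ))^ε + ((n:ℝ))^c' * (K1 * ((n:ℝ))^ε))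
          + K1 * ((n:ℝ))^ε := by
      have hlog2Rb0 : 0 ≤ Real.log (2*Rb) := Real.log_nonneg (by linarith)
      have hlogn0 : 0 ≤ Real.log (n:ℝ) := Real.log_nonneg hn1R
      have hc'1 : c' ≤ 1 := by linarith
      have t1 : Real.log 5 + (D:ℝ) * Real.log (2*Rb)
          ≤ 2*((n:ℝ))^ε + ((n:ℝ))^c' * (K1 * ((n:ℝ))^ε) := by
        have : (D:ℝ) * Real.log (2*Rb) ≤ ((n:ℝ))^c' * (K1 * ((n:ℝ))^ε) := by
          refine mul_le_mul hDle hlog2Rb (by positivity) (by positivity)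
        linarith
      have t2 : c' * Real.log (n:ℝ) ≤ K1 * ((n:ℝ))^ε := by
        calc c' * Real.log (n:ℝ) ≤ 1 * Real.log (n:ℝ) :=
            mul_le_mul_of_nonneg_right hc'1 hlogn0
          _ = Real.log (n:ℝ) := by ring
          _ ≤ K1 * ((n:ℝ))^ε := hlogn
      have hD1' : (0:ℝ) ≤ (D:ℝ)+1 := by positivity
      have t3 : ((D:ℝ)+1) * (Real.log 5 + (D:ℝ) * Real.log (2*Rb))
          ≤ (2*((n:ℝ))^c') * (2*((n:ℝ))^ε + ((n:ℝ))^c' * (K1 * ((n:ℝ))^ε)) := by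
        refine mul_le_mul hDn t1 ?_ (by positivity)
        positivity
      linarith
    push_cast
    refine e1.trans ?_
    have r1 : ((n:ℝ))^c' * ((n:ℝ))^ε = ((n:ℝ))^(c'+ε) := (Real.rpow_add hnpos _ _).symm
    have r2 : ((n:ℝ))^c' * (((n:ℝ))^c' * ((n:ℝ))^ε) = ((n:ℝ))^(2*c'+ε) := by
      rw [r1, ← Real.rpow_add hnpos]
      congr 1; ring
    have b1 : ((n:ℝ))^(c'+ε) ≤ ((n:ℝ))^(c-ε) := hexps _ (by rw [hcε]; linarith) (by linarith)
    have b2 : ((n:ℝ))^(2*c'+ε) ≤ ((n:ℝ))^(c-ε) := hexps _ (by rw [hcε]) (by linarith)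
    have b3 : ((n:ℝ))^ε ≤ ((n:ℝ))^(c-ε) := hexps _ (by rw [hcε]; linarith) hε.le
    calc (2*((n:ℝ))^c') * (2*((n:ℝ))^ε + ((n:ℝ))^c' * (K1 * ((n:ℝ))^ε)) + K1 * ((n:ℝ))^ε
        = 4 * (((n:ℝ))^c' * ((n:ℝ))^ε)
          + 2*K1 * (((n:ℝ))^c' * (((n:ℝ))^c' * ((n:ℝ))^ε)) + K1 * ((n:ℝ))^ε := by ring
      _ = 4 * ((n:ℝ))^(c'+ε) + 2*K1 * ((n:ℝ))^(2*c'+ε) + K1 * ((n:ℝ))^ε := by rw [r2, r1]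
      _ ≤ 4 * ((n:ℝ))^(c-ε) + 2*K1 * ((n:ℝ))^(c-ε) + K1 * ((n:ℝ))^(c-ε) := by
          refine add_le_add (add_le_add ?_ ?_) ?_
          · exact mul_le_mul_of_nonneg_left b1 (by norm_num)
          · exact mul_le_mul_of_nonneg_left b2 (by positivity)
          · exact mul_le_mul_of_nonneg_left b3 hK1pos.le
      _ = (4+3*K1) * ((n:ℝ))^(c-ε) := by ring
  have hTexp : ((2*B+1 : ℝ))^(D+1) * (D:ℝ) ≤ Real.exp (((n:ℝ))^c/4) := by
    refine hTle.trans ?_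
    have hKpos : (0:ℝ) < K := by linarith
    have hpos : (0:ℝ) < (5*K)^(D+1) * ((n:ℝ))^c' := by positivity
    rw [← Real.exp_log hpos]
    refine Real.exp_le_exp.mpr (hlogT.trans ?_)
    have hmul := mul_le_mul_of_nonneg_right hC4 (Real.rpow_nonneg hnpos.le (c-ε))
    rw [← Real.rpow_add hnpos] at hmul
    have : ε + (c - ε) = c := by ring
    rw [this] at hmul
    linarith
  -- final exponential comparisons
  have hncn : ((n:ℝ))^c ≤ (n:ℝ) := by
    have := Real.rpow_le_rpow_of_exponent_le hn1R hc1.le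
    rwa [Real.rpow_one] at this
  have hF : 2 * Real.exp (-(n:ℝ)) ≤ (1/2) * Real.exp (-((n:ℝ))^c/2) := by
    have h : Real.log 4 + -(n:ℝ) ≤ -((n:ℝ))^c/2 := by linarith
    have e1 := Real.exp_le_exp.mpr h
    rw [Real.exp_add, Real.exp_log (by norm_num : (0:ℝ) < 4)] at e1
    linarith
  have hG : Real.exp (((n:ℝ))^c/4) * (2 * Real.exp (-((n:ℝ))^c))
      ≤ (1/2) * Real.exp (-((n:ℝ))^c/2) := by
    have h : Real.log 4 + (((n:ℝ))^c/4 + -((n:ℝ))^c) ≤ -((n:ℝ))^c/2 := by linarith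
    have e1 := Real.exp_le_exp.mpr h
    rw [Real.exp_add, Real.exp_add, Real.exp_log (by norm_num : (0:ℝ) < 4)] at e1
    nlinarith [Real.exp_pos (((n:ℝ))^c/4), Real.exp_pos (-((n:ℝ))^c)]
  have hTmul : ((2*B+1 : ℝ))^(D+1) * (D:ℝ) * (2 * Real.exp (-((n:ℝ))^c))
      ≤ (1/2) * Real.exp (-((n:ℝ))^c/2) := by
    refine le_trans ?_ hG
    refine mul_le_mul_of_nonneg_right hTexp (by positivity)
  calc (P {ω | ∃ z : ℂ, Polynomial.aeval z (Matrix.charpoly (M n ω)) = 0 ∧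
      IsAlgebraic ℚ z ∧ ((minpoly ℚ z).natDegree : ℝ) ≤ (n : ℝ) ^ c'}).toReal
      ≤ (P {ω | ∃ z : ℂ, Polynomial.aeval z (Matrix.charpoly (M n ω)) = 0 ∧
          C * Real.sqrt n < ‖z‖}).toReal +
        ∑ p ∈ polyBox D B, ∑ r ∈ rootsF p,
          (P {ω | Polynomial.aeval ((r:ℝ) : ℂ) (Matrix.charpoly (M n ω)) = 0}).toReal := step2
    _ ≤ 2 * Real.exp (-(n:ℝ)) +
        ((2*B+1 : ℝ))^(D+1) * (D:ℝ) * (2 * Real.exp (-((n:ℝ))^c)) :=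
        add_le_add (hbound n) hsum
    _ ≤ (1/2) * Real.exp (-((n:ℝ))^c/2) + (1/2) * Real.exp (-((n:ℝ))^c/2) :=
        add_le_add hF hTmul
    _ = Real.exp (-((n:ℝ))^c/2) := by ring
end

section
/- For every real M ≥ 1 and every integer k ≥ 2, one has M^((k²+k)/2) · exp((k² − k·log k)/2) ≤ ∏_{j=1}^{k} (2·C(k,j)·M^j + 1) ≤ (e·M)^((k²+k)/2), where C(k,j) is the binomial coefficient. Moreover, for k = 1 the product 2·C(1,1)·M + 1 is at most 3M. -/
open Real Finset Nat Stirling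

lemma stirlingSeq_ge (n : ℕ) : Real.sqrt π ≤ stirlingSeq (n + 1) := by
  have h2 : Filter.Tendsto (stirlingSeq ∘ Nat.succ) Filter.atTop (nhds (Real.sqrt π)) :=
    Stirling.tendsto_stirlingSeq_sqrt_pi.comp (Filter.tendsto_add_atTop_nat 1)
  exact le_of_tendsto h2 (Filter.eventually_atTop.2
    ⟨n, fun m hm => Stirling.stirlingSeq'_antitone hm⟩)

lemma stirlingSeq_le (n : ℕ) : stirlingSeq (n + 1) ≤ Real.exp 1 / Real.sqrt 2 := by
  have := Stirling.stirlingSeq'_antitone (Nat.zero_le n)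
  simpa using this

lemma log_factorial_lb (k : ℕ) (hk : 1 ≤ k) :
    Real.log (2 * π * k) / 2 + k * (Real.log k - 1) ≤ Real.log (k !) := by
  obtain ⟨n, rfl⟩ : ∃ n, k = n + 1 := ⟨k - 1, by omega⟩
  have hkpos : (0:ℝ) < ((n:ℝ) + 1) := by positivity
  have h := stirlingSeq_ge n
  unfold stirlingSeq at h
  have hcast : ((n + 1 : ℕ) : ℝ) = (n:ℝ) + 1 := by push_cast; ring
  rw [hcast] at h
  have hd : (0:ℝ) < Real.sqrt (2 * ((n:ℝ) + 1)) * (((n:ℝ) + 1) / exp 1) ^ (n + 1) := by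
    positivity
  rw [le_div_iff₀ hd] at h
  have hfact : (0:ℝ) < ((n + 1)! : ℝ) := by positivity
  have h2 := Real.log_le_log (by positivity) h
  rw [Real.log_mul (by positivity) (by positivity),
    Real.log_mul (by positivity) (by positivity),
    Real.log_pow, Real.log_div (by positivity) (Real.exp_ne_zero 1), Real.log_exp,
    Real.log_sqrt (le_of_lt Real.pi_pos), Real.log_sqrt (by positivity)] at h2
  have hpi : Real.log (2 * π * ((n + 1 : ℕ) : ℝ)) =
      Real.log π + Real.log (2 * ((n:ℝ) + 1)) := by
    rw [hcast, ← Real.log_mul (ne_of_gt Real.pi_pos) (by positivity)]; ring_nf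
  rw [hpi, hcast]
  push_cast at h2 ⊢
  linarith

lemma log_factorial_ub (k : ℕ) (hk : 1 ≤ k) :
    Real.log (k !) ≤ 1 + Real.log k / 2 + k * (Real.log k - 1) := by
  obtain ⟨n, rfl⟩ : ∃ n, k = n + 1 := ⟨k - 1, by omega⟩
  have hkpos : (0:ℝ) < ((n:ℝ) + 1) := by positivity
  have h := stirlingSeq_le n
  unfold stirlingSeq at h
  have hcast : ((n + 1 : ℕ) : ℝ) = (n:ℝ) + 1 := by push_cast; ring
  rw [hcast] at h
  have hd : (0:ℝ) < Real.sqrt (2 * ((n:ℝ) + 1)) * (((n:ℝ) + 1) / exp 1) ^ (n + 1) := by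
    positivity
  rw [div_le_div_iff₀ hd (by positivity)] at h
  have hfact : (0:ℝ) < ((n + 1)! : ℝ) := by positivity
  have h2 := Real.log_le_log (by positivity) h
  rw [Real.log_mul (ne_of_gt (Real.exp_pos 1)) (by positivity),
    Real.log_mul (by positivity) (by positivity),
    Real.log_mul (by positivity) (by positivity),
    Real.log_pow, Real.log_div (by positivity) (Real.exp_ne_zero 1), Real.log_exp,
    Real.log_sqrt (by positivity), Real.log_sqrt (by positivity)] at h2
  have h3 : Real.log (2 * ((n:ℝ) + 1)) = Real.log 2 + Real.log ((n:ℝ) + 1) := by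
    rw [← Real.log_mul (by norm_num) (by positivity)]
  have h4 : Real.log (Real.sqrt 2) = Real.log 2 / 2 := Real.log_sqrt (by norm_num)
  rw [h3] at h2
  push_cast at h2 ⊢
  nlinarith [Real.log_nonneg (show (1:ℝ) ≤ 2 by norm_num)]

lemma prodRefl (k : ℕ) : ∏ j ∈ Icc 1 k, (k + 1 - j) = k ! := by
  rw [← Finset.prod_Ico_id_eq_factorial, ← Finset.Ico_add_one_right_eq_Icc]
  exact Finset.prod_nbij' (fun j => k + 1 - j) (fun j => k + 1 - j)
    (by intro a ha; simp only [Finset.mem_Ico] at *; omega)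
    (by intro a ha; simp only [Finset.mem_Ico] at *; omega)
    (by intro a ha; simp only [Finset.mem_Ico] at ha; show k+1-(k+1-a) = a; omega)
    (by intro a ha; simp only [Finset.mem_Ico] at ha; show k+1-(k+1-a) = a; omega)
    (fun a _ => rfl)

lemma cardIcc (k : ℕ) : (Finset.Icc 1 k).card = k := by
  rw [Nat.card_Icc]; omega

lemma prodB_rec (k : ℕ) :
    (∏ j ∈ Icc 1 (k+1), 2 * (k+1).choose j) * k ! =
      2 * (k+1)^k * ∏ j ∈ Icc 1 k, 2 * k.choose j := by
  rw [Finset.prod_Icc_succ_top (Nat.le_add_left 1 k), Nat.choose_self, mul_one]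
  rw [← prodRefl k, mul_right_comm, ← Finset.prod_mul_distrib]
  have : ∀ j ∈ Icc 1 k, 2 * (k+1).choose j * (k + 1 - j) = (k+1) * (2 * k.choose j) := by
    intro j hj
    have h := Nat.choose_mul_succ_eq k j
    calc 2 * (k+1).choose j * (k + 1 - j) = 2 * ((k+1).choose j * (k+1-j)) := by ring
      _ = 2 * (k.choose j * (k+1)) := by rw [← h]
      _ = (k+1) * (2 * k.choose j) := by ring
  rw [Finset.prod_congr rfl this, Finset.prod_mul_distrib, Finset.prod_const, cardIcc]
  ring

lemma prodA_rec (k : ℕ) :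
    (∏ j ∈ Icc 1 (k+1), (2 * (k+1).choose j + 1)) * k ! ≤
      3 * (k+1)^k * ∏ j ∈ Icc 1 k, (2 * k.choose j + 1) := by
  rw [Finset.prod_Icc_succ_top (Nat.le_add_left 1 k), Nat.choose_self, mul_one]
  rw [← prodRefl k, mul_right_comm, ← Finset.prod_mul_distrib]
  have key : ∀ j ∈ Icc 1 k, (2 * (k+1).choose j + 1) * (k + 1 - j) ≤ (k+1) * (2 * k.choose j + 1) := by
    intro j hj
    simp only [Finset.mem_Icc] at hj
    have h := Nat.choose_mul_succ_eq k j
    have h2 : k + 1 - j ≤ k + 1 := by omega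
    calc (2 * (k+1).choose j + 1) * (k + 1 - j)
        = 2 * ((k+1).choose j * (k + 1 - j)) + (k + 1 - j) := by ring
      _ = 2 * (k.choose j * (k+1)) + (k + 1 - j) := by rw [← h]
      _ ≤ (k+1) * (2 * k.choose j + 1) := by ring_nf; omega
  calc (∏ j ∈ Icc 1 k, (2 * (k+1).choose j + 1) * (k + 1 - j)) * (2 + 1)
      ≤ (∏ j ∈ Icc 1 k, (k+1) * (2 * k.choose j + 1)) * (2+1) :=
        Nat.mul_le_mul (Finset.prod_le_prod' key) (le_refl (2+1))
    _ = 3 * (k+1)^k * ∏ j ∈ Icc 1 k, (2 * k.choose j + 1) := by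
        rw [Finset.prod_mul_distrib, Finset.prod_const, cardIcc]; ring

-- log(1+1/k) bounds via log x ≤ x - 1
lemma log_ratio_ub (k : ℕ) (hk : 1 ≤ k) :
    Real.log ((k:ℝ)+1) - Real.log k ≤ 1 / k := by
  have hk0 : (0:ℝ) < k := by exact_mod_cast hk
  have h := Real.log_le_sub_one_of_pos (show (0:ℝ) < ((k:ℝ)+1)/k by positivity)
  rw [Real.log_div (by positivity) (ne_of_gt hk0)] at h
  have : ((k:ℝ)+1)/k - 1 = 1/k := by field_simp; ring
  linarith [this ▸ h]

lemma log_ratio_lb (k : ℕ) (hk : 1 ≤ k) :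
    1 / ((k:ℝ)+1) ≤ Real.log ((k:ℝ)+1) - Real.log k := by
  have hk0 : (0:ℝ) < k := by exact_mod_cast hk
  have h := Real.log_le_sub_one_of_pos (show (0:ℝ) < (k:ℝ)/((k:ℝ)+1) by positivity)
  rw [Real.log_div (ne_of_gt hk0) (by positivity)] at h
  have : (k:ℝ)/((k:ℝ)+1) - 1 = -(1/((k:ℝ)+1)) := by field_simp; ring
  linarith [this ▸ h]

lemma Astep (k : ℕ) (hk : 2 ≤ k) :
    3 * ((k:ℝ)+1)^k ≤ (k ! : ℝ) * Real.exp ((k:ℝ)+1) := by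
  have hk0 : (0:ℝ) < k := by exact_mod_cast Nat.lt_of_lt_of_le Nat.zero_lt_two hk
  have hfact : (0:ℝ) < (k ! : ℝ) := by positivity
  have hL : (3:ℝ) * ((k:ℝ)+1)^k = Real.exp (Real.log 3 + k * Real.log ((k:ℝ)+1)) := by
    rw [Real.exp_add, Real.exp_log (by norm_num), ← Real.log_pow, Real.exp_log (by positivity)]
  have hk2 : (2:ℝ) ≤ (k:ℝ) := by exact_mod_cast hk
  have hR : (k ! : ℝ) * Real.exp ((k:ℝ)+1) = Real.exp (Real.log (k !) + ((k:ℝ)+1)) := by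
    rw [← Real.exp_log hfact, ← Real.exp_add, Real.log_exp]
  rw [hL, hR, Real.exp_le_exp]
  have h1 := log_factorial_lb k (by omega)
  have h2 := log_ratio_ub k (by omega)
  have h3 : Real.log 9 ≤ Real.log (2 * π * k) := by
    apply Real.log_le_log (by norm_num)
    nlinarith [Real.pi_gt_three, hk2]
  have h9 : Real.log 9 = 2 * Real.log 3 := by
    rw [show (9:ℝ) = 3^2 by norm_num, Real.log_pow]; push_cast; ring
  have h4 : (k:ℝ) * (Real.log ((k:ℝ)+1) - Real.log k) ≤ 1 := by
    calc (k:ℝ) * (Real.log ((k:ℝ)+1) - Real.log k) ≤ (k:ℝ) * (1/k) := by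
          exact mul_le_mul_of_nonneg_left h2 (le_of_lt hk0)
      _ = 1 := by field_simp
  nlinarith

lemma Bstep (k : ℕ) (hk : 2 ≤ k) :
    Real.exp (((((k:ℝ)+1)^2 - ((k:ℝ)+1) * Real.log ((k:ℝ)+1)) / 2)
        - (((k:ℝ)^2 - (k:ℝ) * Real.log k) / 2)) * (k ! : ℝ) ≤ 2 * ((k:ℝ)+1)^k := by
  have hk0 : (0:ℝ) < k := by exact_mod_cast Nat.lt_of_lt_of_le Nat.zero_lt_two hk
  have hfact : (0:ℝ) < (k ! : ℝ) := by positivity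
  have hk2 : (2:ℝ) ≤ (k:ℝ) := by exact_mod_cast hk
  set L := Real.log k
  set L' := Real.log ((k:ℝ)+1)
  have hL : Real.exp ((((k:ℝ)+1)^2 - ((k:ℝ)+1) * L') / 2 - ((k:ℝ)^2 - (k:ℝ) * L) / 2) * (k ! : ℝ)
      = Real.exp ((((k:ℝ)+1)^2 - ((k:ℝ)+1) * L') / 2 - ((k:ℝ)^2 - (k:ℝ) * L) / 2 + Real.log (k !)) := by
    rw [Real.exp_add, Real.exp_log hfact]
  have hR : (2:ℝ) * ((k:ℝ)+1)^k = Real.exp (Real.log 2 + k * L') := by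
    rw [Real.exp_add, Real.exp_log (by norm_num), ← Real.log_pow, Real.exp_log (by positivity)]
  rw [hL, hR, Real.exp_le_exp]
  have h1 := log_factorial_ub k (by omega)
  have h2 := log_ratio_lb k (by omega)
  have hlog2 : (0.6931471803 : ℝ) < Real.log 2 := Real.log_two_gt_d9
  -- need: ((3k+1)/2) * (L' - L) ≥ 3/2 - log 2
  have h4 : (1:ℝ) ≤ ((3*(k:ℝ)+1)/2) * (L' - L) := by
    calc (1:ℝ) ≤ (3*(k:ℝ)+1)/(2*((k:ℝ)+1)) := by
          rw [le_div_iff₀ (by positivity)]; nlinarith [hk2]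
      _ = ((3*(k:ℝ)+1)/2) * (1/((k:ℝ)+1)) := by
          field_simp
      _ ≤ ((3*(k:ℝ)+1)/2) * (L' - L) := by
          exact mul_le_mul_of_nonneg_left h2 (by positivity)
  nlinarith

lemma lemA : ∀ k : ℕ, 2 ≤ k →
    ((∏ j ∈ Icc 1 k, (2 * k.choose j + 1) : ℕ) : ℝ) ≤ Real.exp (((k:ℝ)^2 + k)/2) := by
  intro k hk
  induction k, hk using Nat.le_induction with
  | base =>
      have : (∏ j ∈ Icc 1 2, (2 * Nat.choose 2 j + 1) : ℕ) = 15 := by decide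
      rw [this]
      have h3 : Real.exp (((2:ℝ)^2 + 2)/2) = Real.exp 1 ^ 3 := by
        rw [Real.exp_one_pow]; norm_num
      push_cast
      rw [h3]
      have h := Real.exp_one_gt_d9
      have h1 : (2.7:ℝ)^3 ≤ Real.exp 1 ^ 3 := by
        apply pow_le_pow_left₀ (by norm_num) (by linarith)
      nlinarith
  | succ k hk2 ih =>
      have hfact : (0:ℝ) < (k ! : ℝ) := by positivity
      have hrec := prodA_rec k
      have hrecR : ((∏ j ∈ Icc 1 (k+1), (2 * (k+1).choose j + 1) : ℕ) : ℝ) * (k ! : ℝ) ≤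
          3 * ((k:ℝ)+1)^k * ((∏ j ∈ Icc 1 k, (2 * k.choose j + 1) : ℕ) : ℝ) := by
        exact_mod_cast hrec
      have hA := Astep k hk2
      have hP : (0:ℝ) ≤ ((∏ j ∈ Icc 1 k, (2 * k.choose j + 1) : ℕ) : ℝ) := by positivity
      have hE : ((∏ j ∈ Icc 1 k, (2 * k.choose j + 1) : ℕ) : ℝ) ≤ Real.exp (((k:ℝ)^2 + k)/2) := ih
      have key : ((∏ j ∈ Icc 1 (k+1), (2 * (k+1).choose j + 1) : ℕ) : ℝ) * (k ! : ℝ) ≤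
          (k ! : ℝ) * Real.exp ((k:ℝ)+1) * Real.exp (((k:ℝ)^2 + k)/2) := by
        calc ((∏ j ∈ Icc 1 (k+1), (2 * (k+1).choose j + 1) : ℕ) : ℝ) * (k ! : ℝ)
            ≤ 3 * ((k:ℝ)+1)^k * ((∏ j ∈ Icc 1 k, (2 * k.choose j + 1) : ℕ) : ℝ) := hrecR
          _ ≤ ((k ! : ℝ) * Real.exp ((k:ℝ)+1)) * Real.exp (((k:ℝ)^2 + k)/2) := by
              apply mul_le_mul hA hE hP
              positivity
      have h2 : ((∏ j ∈ Icc 1 (k+1), (2 * (k+1).choose j + 1) : ℕ) : ℝ) ≤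
          Real.exp ((k:ℝ)+1) * Real.exp (((k:ℝ)^2 + k)/2) := by
        nlinarith [key, Real.exp_pos ((k:ℝ)+1), Real.exp_pos (((k:ℝ)^2 + k)/2)]
      calc ((∏ j ∈ Icc 1 (k+1), (2 * (k+1).choose j + 1) : ℕ) : ℝ)
          ≤ Real.exp ((k:ℝ)+1) * Real.exp (((k:ℝ)^2 + k)/2) := h2
        _ = Real.exp ((((k:ℝ)+1)^2 + ((k:ℝ)+1))/2) := by
            rw [← Real.exp_add]; ring_nf
        _ = Real.exp ((((k+1:ℕ):ℝ))^2 / 2 + ((k+1:ℕ):ℝ) / 2) := by push_cast; ring_nf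
        _ = Real.exp ((((k+1:ℕ):ℝ)^2 + ((k+1:ℕ):ℝ))/2) := by ring_nf

lemma lemB : ∀ k : ℕ, 2 ≤ k →
    Real.exp (((k:ℝ)^2 - k * Real.log k)/2) ≤ ((∏ j ∈ Icc 1 k, 2 * k.choose j : ℕ) : ℝ) := by
  intro k hk
  induction k, hk using Nat.le_induction with
  | base =>
      have : (∏ j ∈ Icc 1 2, (2 * Nat.choose 2 j) : ℕ) = 8 := by decide
      rw [this]
      have hL : Real.exp ((((2:ℕ):ℝ)^2 - ((2:ℕ):ℝ) * Real.log ((2:ℕ):ℝ))/2) = Real.exp 2 / 2 := by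
        have : (((2:ℕ):ℝ)^2 - ((2:ℕ):ℝ) * Real.log ((2:ℕ):ℝ))/2 = 2 - Real.log 2 := by
          push_cast; ring
        rw [this, Real.exp_sub, Real.exp_log (by norm_num)]
      rw [hL]
      have : Real.exp 2 = Real.exp 1 ^ 2 := by rw [Real.exp_one_pow]; norm_num
      nlinarith [Real.exp_one_lt_d9, Real.exp_pos 1]
  | succ k hk2 ih =>
      have hfact : (0:ℝ) < (k ! : ℝ) := by positivity
      have hrec := prodB_rec k
      have hrecR : ((∏ j ∈ Icc 1 (k+1), 2 * (k+1).choose j : ℕ) : ℝ) * (k ! : ℝ) =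
          2 * ((k:ℝ)+1)^k * ((∏ j ∈ Icc 1 k, 2 * k.choose j : ℕ) : ℝ) := by
        exact_mod_cast hrec
      have hB := Bstep k hk2
      set D := (((k:ℝ)+1)^2 - ((k:ℝ)+1) * Real.log ((k:ℝ)+1)) / 2
          - ((k:ℝ)^2 - (k:ℝ) * Real.log k) / 2 with hD
      have key : Real.exp D * (k ! : ℝ) * Real.exp (((k:ℝ)^2 - k * Real.log k)/2) ≤
          ((∏ j ∈ Icc 1 (k+1), 2 * (k+1).choose j : ℕ) : ℝ) * (k ! : ℝ) := by
        rw [hrecR]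
        calc Real.exp D * (k ! : ℝ) * Real.exp (((k:ℝ)^2 - k * Real.log k)/2)
            ≤ 2 * ((k:ℝ)+1)^k * Real.exp (((k:ℝ)^2 - k * Real.log k)/2) := by
              apply mul_le_mul_of_nonneg_right hB (le_of_lt (Real.exp_pos _))
          _ ≤ 2 * ((k:ℝ)+1)^k * ((∏ j ∈ Icc 1 k, 2 * k.choose j : ℕ) : ℝ) := by
              apply mul_le_mul_of_nonneg_left ih (by positivity)
      have h2 : Real.exp D * Real.exp (((k:ℝ)^2 - k * Real.log k)/2) ≤
          ((∏ j ∈ Icc 1 (k+1), 2 * (k+1).choose j : ℕ) : ℝ) := by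
        nlinarith [key, Real.exp_pos D, Real.exp_pos (((k:ℝ)^2 - k * Real.log k)/2)]
      calc Real.exp (((((k+1:ℕ):ℝ))^2 - ((k+1:ℕ):ℝ) * Real.log ((k+1:ℕ):ℝ))/2)
          = Real.exp D * Real.exp (((k:ℝ)^2 - k * Real.log k)/2) := by
            rw [← Real.exp_add, hD]; push_cast; ring_nf
        _ ≤ _ := h2

lemma sumIcc (k : ℕ) : ((∑ j ∈ Icc 1 k, j : ℕ) : ℝ) = ((k:ℝ)^2 + k)/2 := by
  induction k with
  | zero => simp
  | succ n ih =>
      rw [Finset.sum_Icc_succ_top (Nat.le_add_left 1 n)]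
      push_cast [Nat.cast_add] at ih ⊢
      ring_nf
      ring_nf at ih
      linarith

/-- For `M ≥ 1` and `k ≥ 2`,
`M^((k²+k)/2) exp((k² - k log k)/2) ≤ ∏_{j=1}^k (2 C(k,j) M^j + 1) ≤ (e M)^((k²+k)/2)`;
and for `k = 1` the product `2 C(1,1) M + 1` is at most `3M`. -/
theorem product_bounds (M : ℝ) (hM : 1 ≤ M) :
    (∀ k : ℕ, 2 ≤ k →
      M ^ (((k : ℝ) ^ 2 + k) / 2) * Real.exp (((k : ℝ) ^ 2 - k * Real.log k) / 2)
          ≤ ∏ j ∈ Finset.Icc 1 k, (2 * (k.choose j) * M ^ j + 1) ∧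
        ∏ j ∈ Finset.Icc 1 k, (2 * (k.choose j) * M ^ j + 1)
          ≤ (Real.exp 1 * M) ^ (((k : ℝ) ^ 2 + k) / 2)) ∧
    2 * (Nat.choose 1 1) * M + 1 ≤ 3 * M := by
  have hM0 : (0:ℝ) < M := lt_of_lt_of_le one_pos hM
  constructor
  · intro k hk
    set S := ∑ j ∈ Icc 1 k, j with hS
    have hSr : ((S:ℕ):ℝ) = ((k:ℝ)^2 + k)/2 := sumIcc k
    have hMS : M ^ (((k : ℝ) ^ 2 + k) / 2) = M ^ S := by
      rw [← hSr, Real.rpow_natCast]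
    have hprodM : ∏ j ∈ Icc 1 k, M ^ j = M ^ S := Finset.prod_pow_eq_pow_sum _ _ _
    constructor
    · -- lower bound
      have h1 : M ^ S * Real.exp (((k:ℝ)^2 - k * Real.log k)/2) ≤
          M ^ S * ((∏ j ∈ Icc 1 k, 2 * k.choose j : ℕ) : ℝ) :=
        mul_le_mul_of_nonneg_left (lemB k hk) (by positivity)
      have h2 : M ^ S * ((∏ j ∈ Icc 1 k, 2 * k.choose j : ℕ) : ℝ) =
          ∏ j ∈ Icc 1 k, (2 * (k.choose j : ℝ) * M ^ j) := by
        rw [Nat.cast_prod, ← hprodM, ← Finset.prod_mul_distrib]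
        apply Finset.prod_congr rfl
        intro j _
        push_cast
        ring
      have h3 : ∏ j ∈ Icc 1 k, (2 * (k.choose j : ℝ) * M ^ j) ≤
          ∏ j ∈ Icc 1 k, (2 * (k.choose j : ℝ) * M ^ j + 1) := by
        apply Finset.prod_le_prod
        · intro j _; positivity
        · intro j _; linarith
      rw [hMS]
      calc M ^ S * Real.exp (((k:ℝ)^2 - k * Real.log k)/2)
          ≤ M ^ S * ((∏ j ∈ Icc 1 k, 2 * k.choose j : ℕ) : ℝ) := h1
        _ = ∏ j ∈ Icc 1 k, (2 * (k.choose j : ℝ) * M ^ j) := h2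
        _ ≤ _ := h3
    · -- upper bound
      have h1 : ∏ j ∈ Icc 1 k, (2 * (k.choose j : ℝ) * M ^ j + 1) ≤
          ∏ j ∈ Icc 1 k, ((2 * (k.choose j : ℝ) + 1) * M ^ j) := by
        apply Finset.prod_le_prod
        · intro j _; positivity
        · intro j hj
          have hMj : (1:ℝ) ≤ M ^ j := one_le_pow₀ hM
          have hC : (0:ℝ) ≤ (k.choose j : ℝ) := by positivity
          nlinarith
      have h2 : ∏ j ∈ Icc 1 k, ((2 * (k.choose j : ℝ) + 1) * M ^ j) =
          ((∏ j ∈ Icc 1 k, (2 * k.choose j + 1) : ℕ) : ℝ) * M ^ S := by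
        rw [Finset.prod_mul_distrib, hprodM, Nat.cast_prod]
        congr 1
        apply Finset.prod_congr rfl
        intro j _
        push_cast
        ring
      have h3 : ((∏ j ∈ Icc 1 k, (2 * k.choose j + 1) : ℕ) : ℝ) * M ^ S ≤
          Real.exp (((k:ℝ)^2 + k)/2) * M ^ S :=
        mul_le_mul_of_nonneg_right (lemA k hk) (by positivity)
      have h4 : Real.exp (((k:ℝ)^2 + k)/2) * M ^ S = (Real.exp 1 * M) ^ (((k:ℝ)^2 + k)/2) := by
        rw [← hSr, Real.rpow_natCast, mul_pow, Real.exp_one_pow]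
      calc ∏ j ∈ Icc 1 k, (2 * (k.choose j : ℝ) * M ^ j + 1)
          ≤ ∏ j ∈ Icc 1 k, ((2 * (k.choose j : ℝ) + 1) * M ^ j) := h1
        _ = ((∏ j ∈ Icc 1 k, (2 * k.choose j + 1) : ℕ) : ℝ) * M ^ S := h2
        _ ≤ Real.exp (((k:ℝ)^2 + k)/2) * M ^ S := h3
        _ = _ := h4
  · simp [Nat.choose_self]
    linarith
end

section
/- For every real M ≥ 1 and every integer k ≥ 2, one has ∑_{l=1}^{k} l · ∏_{j=1}^{l} (2·C(l,j)·M^j + 1) ≤ (e·M)^(k²), where C(l,j) is the binomial coefficient. For k = 1 the sum is at most 3M. -/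
open Finset

private lemma prod_Icc_one_eq {G : Type*} [CommMonoid G] (f : ℕ → G) (n : ℕ) :
    ∏ j ∈ Icc 1 n, f j = ∏ j ∈ range n, f (j + 1) := by
  rw [← Finset.Ico_add_one_right_eq_Icc, Finset.prod_Ico_eq_prod_range]
  simp [add_comm]

private lemma one_add_inv_pow_le (n : ℕ) :
    (1 + 1 / ((n : ℝ) + 1)) ^ (n + 1) ≤ Real.exp 1 := by
  have h1 : (0:ℝ) < (n : ℝ) + 1 := by positivity
  have h := Real.add_one_le_exp (1 / ((n : ℝ) + 1))
  calc (1 + 1 / ((n : ℝ) + 1)) ^ (n + 1)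
      ≤ Real.exp (1 / ((n : ℝ) + 1)) ^ (n + 1) := by
        apply pow_le_pow_left₀ (by positivity) (by linarith)
    _ = Real.exp (((n : ℝ) + 1) * (1 / ((n : ℝ) + 1))) := by
        rw [← Real.exp_nat_mul]; push_cast; ring_nf
    _ = Real.exp 1 := by rw [mul_one_div_cancel (ne_of_gt h1)]

private lemma succ_pow_le (l : ℕ) :
    ((l : ℝ) + 1) ^ l ≤ Real.exp 1 ^ l * (l.factorial : ℝ) := by
  induction l with
  | zero => simp
  | succ l ih =>
    push_cast
    have h1 : ((l : ℝ) + 2) ^ (l + 1) ≤ Real.exp 1 * ((l : ℝ) + 1) ^ (l + 1) := by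
      have h2 := one_add_inv_pow_le l
      have h3 : (0:ℝ) < (l : ℝ) + 1 := by positivity
      have key : ((l : ℝ) + 2) ^ (l + 1)
          = ((l : ℝ) + 1) ^ (l + 1) * (1 + 1 / ((l : ℝ) + 1)) ^ (l + 1) := by
        rw [← mul_pow]; field_simp; ring_nf
      rw [key]
      calc ((l : ℝ) + 1) ^ (l + 1) * (1 + 1 / ((l : ℝ) + 1)) ^ (l + 1)
          ≤ ((l : ℝ) + 1) ^ (l + 1) * Real.exp 1 := by
            apply mul_le_mul_of_nonneg_left h2 (by positivity)
        _ = Real.exp 1 * ((l : ℝ) + 1) ^ (l + 1) := by ring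
    have hE : (0:ℝ) < Real.exp 1 := Real.exp_pos 1
    calc ((l:ℝ) + 1 + 1) ^ (l + 1) = ((l : ℝ) + 2) ^ (l + 1) := by ring
      _ ≤ Real.exp 1 * ((l : ℝ) + 1) ^ (l + 1) := h1
      _ = Real.exp 1 * (((l : ℝ) + 1) * ((l : ℝ) + 1) ^ l) := by ring
      _ ≤ Real.exp 1 * (((l : ℝ) + 1) * (Real.exp 1 ^ l * l.factorial)) := by
          apply mul_le_mul_of_nonneg_left _ (le_of_lt hE)
          exact mul_le_mul_of_nonneg_left ih (by positivity)
      _ = Real.exp 1 ^ (l + 1) * (((l : ℝ) + 1) * l.factorial) := by ring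
      _ = Real.exp 1 ^ (l + 1) * ((l + 1).factorial : ℝ) := by
          rw [Nat.factorial_succ]; push_cast; ring

private lemma prod_sub_eq_factorial (l : ℕ) :
    ∏ j ∈ Icc 1 l, (l + 1 - j) = l.factorial := by
  rw [prod_Icc_one_eq]
  have h : ∏ j ∈ range l, (l + 1 - (j + 1)) = ∏ j ∈ range l, ((fun j => j + 1) (l - 1 - j)) := by
    apply Finset.prod_congr rfl
    intro j hj
    simp only [Finset.mem_range] at hj
    simp only
    omega
  rw [h, Finset.prod_range_reflect (fun j => j + 1) l,
    Finset.prod_range_add_one_eq_factorial]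

private lemma choose_prod_id (l : ℕ) :
    (∏ j ∈ Icc 1 (l + 1), (l + 1).choose j) * l.factorial
      = (∏ j ∈ Icc 1 l, l.choose j) * (l + 1) ^ l := by
  have h1 : ∏ j ∈ Icc 1 (l + 1), (l + 1).choose j = ∏ j ∈ Icc 1 l, (l + 1).choose j := by
    rw [Finset.prod_Icc_succ_top (by omega)]
    simp
  rw [h1, ← prod_sub_eq_factorial l, ← Finset.prod_mul_distrib]
  have h2 : ∀ j ∈ Icc 1 l, (l + 1).choose j * (l + 1 - j) = l.choose j * (l + 1) := by
    intro j hj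
    rw [← Nat.choose_mul_succ_eq]
  rw [Finset.prod_congr rfl h2, Finset.prod_mul_distrib, Finset.prod_const, Nat.card_Icc]
  simp

private lemma choose_prod_le (l : ℕ) :
    (∏ j ∈ Icc 1 l, (l.choose j : ℝ)) ≤ Real.exp 1 ^ (∑ j ∈ range l, j) := by
  induction l with
  | zero => simp
  | succ l ih =>
    have key : (∏ j ∈ Icc 1 (l + 1), ((l + 1).choose j : ℝ)) * (l.factorial : ℝ)
        = (∏ j ∈ Icc 1 l, (l.choose j : ℝ)) * ((l : ℝ) + 1) ^ l := by
      have h0 := congrArg (fun n : ℕ => (n : ℝ)) (choose_prod_id l)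
      push_cast at h0
      convert h0 using 2
    have hfac : (0:ℝ) < (l.factorial : ℝ) := by positivity
    rw [Finset.sum_range_succ, pow_add]
    have hmain : (∏ j ∈ Icc 1 (l + 1), ((l + 1).choose j : ℝ)) * (l.factorial : ℝ)
        ≤ (Real.exp 1 ^ (∑ j ∈ range l, j) * Real.exp 1 ^ l) * (l.factorial : ℝ) := by
      rw [key]
      calc (∏ j ∈ Icc 1 l, (l.choose j : ℝ)) * ((l : ℝ) + 1) ^ l
          ≤ Real.exp 1 ^ (∑ j ∈ range l, j) * (Real.exp 1 ^ l * l.factorial) :=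
            mul_le_mul ih (succ_pow_le l)
              (by positivity) (by positivity)
        _ = (Real.exp 1 ^ (∑ j ∈ range l, j) * Real.exp 1 ^ l) * (l.factorial : ℝ) := by ring
    exact le_of_mul_le_mul_right hmain hfac

private lemma exp_step (k : ℕ) (hk : 1 ≤ k) :
    1 + ((k : ℝ) + 1) * 3 ^ (k + 1) ≤ Real.exp 1 ^ (2 * k + 1) := by
  induction k with
  | zero => omega
  | succ k ih =>
    rcases Nat.eq_or_lt_of_le hk with h | h
    · have hk0 : k = 0 := by omega
      subst hk0
      have h1 : (2.7182818283 : ℝ) ≤ Real.exp 1 := le_of_lt Real.exp_one_gt_d9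
      have h2 : (2.7182818283 : ℝ) ^ 3 ≤ Real.exp 1 ^ 3 := by
        apply pow_le_pow_left₀ (by norm_num) h1
      have e3 : 2 * (0 + 1) + 1 = 3 := by norm_num
      rw [e3]
      push_cast
      nlinarith [h2]
    · have hk1 : 1 ≤ k := by omega
      have ih' := ih hk1
      have hE : (2.7182818283 : ℝ) ≤ Real.exp 1 := le_of_lt Real.exp_one_gt_d9
      have hE2 : (7 : ℝ) ≤ Real.exp 1 ^ 2 := by nlinarith
      have h3 : (1:ℝ) ≤ 3 ^ (k + 1) := one_le_pow₀ (by norm_num)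
      have hkR : (1:ℝ) ≤ (k : ℝ) := by exact_mod_cast hk1
      have key : 2 * (k + 1) + 1 = (2 * k + 1) + 2 := by ring
      rw [key, pow_add (Real.exp 1) (2 * k + 1) 2]
      have hpos : (0:ℝ) < Real.exp 1 ^ 2 := by positivity
      push_cast
      calc 1 + ((k : ℝ) + 1 + 1) * 3 ^ (k + 1 + 1)
          ≤ (1 + ((k : ℝ) + 1) * 3 ^ (k + 1)) * 7 := by
            rw [pow_succ]
            nlinarith [h3, hkR]
        _ ≤ (1 + ((k : ℝ) + 1) * 3 ^ (k + 1)) * Real.exp 1 ^ 2 := by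
            apply mul_le_mul_of_nonneg_left hE2 (by positivity)
        _ ≤ Real.exp 1 ^ (2 * k + 1) * Real.exp 1 ^ 2 :=
            mul_le_mul_of_nonneg_right ih' (le_of_lt hpos)

private lemma S_bound (k : ℕ) (hk : 2 ≤ k) :
    ∑ l ∈ Icc 1 k, (l : ℝ) * 3 ^ l * Real.exp 1 ^ (∑ j ∈ range l, j)
      ≤ Real.exp 1 ^ (k ^ 2) := by
  induction k with
  | zero => omega
  | succ k ih =>
    rcases Nat.eq_or_lt_of_le hk with h | h
    · have hk1 : k = 1 := by omega
      subst hk1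
      have hset : Finset.Icc (1:ℕ) 2 = {1, 2} := by decide
      rw [hset, Finset.sum_insert (by decide), Finset.sum_singleton]
      have e1 : (∑ j ∈ range 1, j) = 0 := by decide
      have e2 : (∑ j ∈ range 2, j) = 1 := by decide
      rw [e1, e2, pow_zero, pow_one]
      have h1 : (2.7182818283 : ℝ) ≤ Real.exp 1 := le_of_lt Real.exp_one_gt_d9
      have h2 : Real.exp 1 < 2.7182818286 := Real.exp_one_lt_d9
      have h4 : (2.7182818283 : ℝ) ^ 4 ≤ Real.exp 1 ^ 4 := by
        apply pow_le_pow_left₀ (by norm_num) h1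
      have e4 : (1 + 1 : ℕ) ^ 2 = 4 := by norm_num
      rw [e4]
      push_cast
      nlinarith [h4, h2]
    · have hk2 : 2 ≤ k := by omega
      have ih' := ih hk2
      rw [Finset.sum_Icc_succ_top (by omega)]
      have hg : (∑ j ∈ range (k + 1), j) ≤ k ^ 2 := by
        have h0 := Finset.sum_range_id_mul_two (k + 1)
        have hk1 : 1 ≤ k := by omega
        have h2 : (∑ i ∈ range (k + 1), i) * 2 = (k + 1) * k := by simpa using h0
        have h3 : (∑ i ∈ range (k + 1), i) * 2 ≤ k ^ 2 * 2 := by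
          rw [h2]; nlinarith [hk1]
        exact Nat.le_of_mul_le_mul_right h3 (by norm_num)
      have hE1 : (1:ℝ) ≤ Real.exp 1 := by
        have := Real.exp_one_gt_d9; linarith
      have hgE : Real.exp 1 ^ (∑ j ∈ range (k + 1), j) ≤ Real.exp 1 ^ (k ^ 2) :=
        pow_le_pow_right₀ hE1 hg
      have hstep := exp_step k (by omega)
      have hsq : (k + 1) ^ 2 = k ^ 2 + (2 * k + 1) := by ring
      rw [hsq, pow_add (Real.exp 1) (k ^ 2) (2 * k + 1)]
      have hterm : ((k : ℝ) + 1) * 3 ^ (k + 1) * Real.exp 1 ^ (∑ j ∈ range (k + 1), j)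
          ≤ ((k : ℝ) + 1) * 3 ^ (k + 1) * Real.exp 1 ^ (k ^ 2) :=
        mul_le_mul_of_nonneg_left hgE (by positivity)
      have hEpos : (0:ℝ) < Real.exp 1 ^ (k ^ 2) := by positivity
      calc (∑ l ∈ Icc 1 k, (l : ℝ) * 3 ^ l * Real.exp 1 ^ (∑ j ∈ range l, j))
            + ((k + 1 : ℕ) : ℝ) * 3 ^ (k + 1) * Real.exp 1 ^ (∑ j ∈ range (k + 1), j)
          ≤ Real.exp 1 ^ (k ^ 2) + ((k : ℝ) + 1) * 3 ^ (k + 1) * Real.exp 1 ^ (k ^ 2) := by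
            refine add_le_add ih' ?_
            push_cast
            exact hterm
        _ = Real.exp 1 ^ (k ^ 2) * (1 + ((k : ℝ) + 1) * 3 ^ (k + 1)) := by ring
        _ ≤ Real.exp 1 ^ (k ^ 2) * Real.exp 1 ^ (2 * k + 1) :=
            mul_le_mul_of_nonneg_left hstep (le_of_lt hEpos)

/-- For `M ≥ 1` and `k ≥ 2`,
`∑_{l=1}^k l ∏_{j=1}^l (2 C(l,j) M^j + 1) ≤ (e M)^(k²)`; for `k = 1` the sum is at most
`3M`. -/
theorem sum_bound (M : ℝ) (hM : 1 ≤ M) :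
    (∀ k : ℕ, 2 ≤ k →
      ∑ l ∈ Finset.Icc 1 k, (l : ℝ) * ∏ j ∈ Finset.Icc 1 l, (2 * (l.choose j) * M ^ j + 1)
        ≤ (Real.exp 1 * M) ^ (k ^ 2)) ∧
    ∑ l ∈ Finset.Icc (1 : ℕ) 1, (l : ℝ) * ∏ j ∈ Finset.Icc 1 l, (2 * (l.choose j) * M ^ j + 1)
      ≤ 3 * M := by
  have hM0 : (0:ℝ) ≤ M := by linarith
  constructor
  · intro k hk
    have hE1 : (1:ℝ) ≤ Real.exp 1 := by
      have := Real.exp_one_gt_d9; linarith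
    have hterm : ∀ l ∈ Icc 1 k,
        (l : ℝ) * ∏ j ∈ Icc 1 l, (2 * (l.choose j) * M ^ j + 1)
          ≤ ((l : ℝ) * 3 ^ l * Real.exp 1 ^ (∑ j ∈ range l, j)) * M ^ (k ^ 2) := by
      intro l hl
      rw [Finset.mem_Icc] at hl
      obtain ⟨hl1, hlk⟩ := hl
      have hA : ∏ j ∈ Icc 1 l, (2 * (l.choose j : ℝ) * M ^ j + 1)
          ≤ ∏ j ∈ Icc 1 l, (3 * (l.choose j : ℝ) * M ^ j) := by
        apply Finset.prod_le_prod
        · intro j _; positivity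
        · intro j hj
          rw [Finset.mem_Icc] at hj
          have hc : 1 ≤ (l.choose j : ℝ) := by
            exact_mod_cast Nat.one_le_iff_ne_zero.mpr (Nat.choose_pos hj.2).ne'
          have hMj : (1:ℝ) ≤ M ^ j := one_le_pow₀ hM
          nlinarith [hc, hMj]
      have hB : ∏ j ∈ Icc 1 l, (3 * (l.choose j : ℝ) * M ^ j)
          = 3 ^ l * (∏ j ∈ Icc 1 l, (l.choose j : ℝ)) * M ^ (∑ j ∈ Icc 1 l, j) := by
        rw [Finset.prod_mul_distrib, Finset.prod_mul_distrib, Finset.prod_const,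
          Nat.card_Icc, Finset.prod_pow_eq_pow_sum]
        simp
      have hs : (∑ j ∈ Icc 1 l, j) ≤ k ^ 2 := by
        calc (∑ j ∈ Icc 1 l, j) ≤ ∑ _j ∈ Icc 1 l, l :=
              Finset.sum_le_sum fun j hj => (Finset.mem_Icc.mp hj).2
          _ = l * l := by rw [Finset.sum_const, Nat.card_Icc]; simp [Nat.mul_comm]
          _ ≤ k ^ 2 := by nlinarith [hlk]
      have hC : ∏ j ∈ Icc 1 l, (3 * (l.choose j : ℝ) * M ^ j)
          ≤ 3 ^ l * Real.exp 1 ^ (∑ j ∈ range l, j) * M ^ (k ^ 2) := by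
        rw [hB]
        have h1 : (∏ j ∈ Icc 1 l, (l.choose j : ℝ)) ≤ Real.exp 1 ^ (∑ j ∈ range l, j) :=
          choose_prod_le l
        have h2 : M ^ (∑ j ∈ Icc 1 l, j) ≤ M ^ (k ^ 2) := pow_le_pow_right₀ hM hs
        have h3 : (0:ℝ) ≤ ∏ j ∈ Icc 1 l, (l.choose j : ℝ) :=
          Finset.prod_nonneg fun j _ => by positivity
        apply mul_le_mul (mul_le_mul le_rfl h1 h3 (by positivity)) h2 (by positivity)
        positivity
      calc (l : ℝ) * ∏ j ∈ Icc 1 l, (2 * (l.choose j : ℝ) * M ^ j + 1)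
          ≤ (l : ℝ) * (3 ^ l * Real.exp 1 ^ (∑ j ∈ range l, j) * M ^ (k ^ 2)) := by
            apply mul_le_mul_of_nonneg_left (le_trans hA hC) (by positivity)
        _ = ((l : ℝ) * 3 ^ l * Real.exp 1 ^ (∑ j ∈ range l, j)) * M ^ (k ^ 2) := by ring
    calc ∑ l ∈ Icc 1 k, (l : ℝ) * ∏ j ∈ Icc 1 l, (2 * (l.choose j : ℝ) * M ^ j + 1)
        ≤ ∑ l ∈ Icc 1 k, ((l : ℝ) * 3 ^ l * Real.exp 1 ^ (∑ j ∈ range l, j)) * M ^ (k ^ 2) :=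
          Finset.sum_le_sum hterm
      _ = (∑ l ∈ Icc 1 k, (l : ℝ) * 3 ^ l * Real.exp 1 ^ (∑ j ∈ range l, j)) * M ^ (k ^ 2) :=
          (Finset.sum_mul _ _ _).symm
      _ ≤ Real.exp 1 ^ (k ^ 2) * M ^ (k ^ 2) :=
          mul_le_mul_of_nonneg_right (S_bound k hk) (by positivity)
      _ = (Real.exp 1 * M) ^ (k ^ 2) := (mul_pow _ _ _).symm
  · simp only [Finset.Icc_self, Finset.sum_singleton, Finset.prod_singleton]
    norm_num
    linarith
end

section
/- Let n ≥ 1 be such that n + 1 is prime and 2 generates the multiplicative group (ℤ/(n+1))^×, i.e., 2 is a primitive root modulo n+1. Then every polynomial f(z) = z^n + ξ_{n−1} z^{n−1} + ⋯ + ξ_1 z + ξ_0 with each coefficient ξ_j ∈ {1, −1} is irreducible over ℚ. -/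
open Polynomial

lemma geom_irred (p : ℕ) (hp : p.Prime) (hp2 : p ≠ 2) (u : (ZMod p)ˣ)
    (hord : orderOf u = p - 1) (hu : (u : ZMod p) = 2) :
    Irreducible (∑ i ∈ Finset.range p, (X : (ZMod 2)[X]) ^ i) := by
  haveI : Fact p.Prime := ⟨hp⟩
  rw [← cyclotomic_prime (ZMod 2) p]
  set g : (ZMod 2)[X] := cyclotomic p (ZMod 2) with hg
  have hgmonic : g.Monic := cyclotomic.monic p (ZMod 2)
  have hdeg : g.natDegree = p - 1 := by
    rw [hg, natDegree_cyclotomic, Nat.totient_prime hp]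
  have hp1pos : 0 < p - 1 := by
    have := hp.two_le
    omega
  have hgnotunit : ¬ IsUnit g := by
    apply not_isUnit_of_natDegree_pos
    omega
  obtain ⟨q, hqmonic, hqirr, hqdvd⟩ := g.exists_monic_irreducible_factor hgnotunit
  haveI : Fact (Irreducible q) := ⟨hqirr⟩
  -- the field F = 𝔽₂[X]/(q)
  set F := AdjoinRoot q with hF
  haveI : Finite F := by
    have : Module.Finite (ZMod 2) F := PowerBasis.finite (AdjoinRoot.powerBasis hqirr.ne_zero)
    exact Module.finite_of_finite (ZMod 2)
  haveI : Fintype F := Fintype.ofFinite F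
  set α : F := AdjoinRoot.root q with hα
  have hqα : aeval α q = 0 := by
    rw [AdjoinRoot.aeval_eq]; exact AdjoinRoot.mk_self
  have hgα : aeval α g = 0 := by
    obtain ⟨c, hc⟩ := hqdvd
    rw [hc, map_mul, hqα, zero_mul]
  have hαp : α ^ p = 1 := by
    have h1 : (aeval α) ((∑ i ∈ Finset.range p, (X : (ZMod 2)[X]) ^ i) * (X - 1))
        = (aeval α) ((X : (ZMod 2)[X]) ^ p - 1) := by
      rw [geom_sum_mul]
    rw [← cyclotomic_prime (ZMod 2) p, ← hg] at h1
    simp only [map_mul, hgα, zero_mul, map_sub, map_pow, aeval_X, map_one] at h1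
    linear_combination -h1
  have hα1 : α ≠ 1 := by
    intro h
    rw [h] at hgα
    have : (aeval (1 : F)) g = (p : F) := by
      rw [hg, cyclotomic_prime (ZMod 2) p]
      simp
    rw [this] at hgα
    have hodd : Odd p := hp.odd_of_ne_two hp2
    have hp2' : (p : ZMod 2) = 1 := by
      rw [← ZMod.natCast_mod p 2, Nat.odd_iff.mp hodd, Nat.cast_one]
    have h3 : (p : F) = 1 := by
      rw [← map_natCast (algebraMap (ZMod 2) F) p, hp2', map_one]
    rw [h3] at hgα
    exact one_ne_zero hgα
  have hordα : orderOf α = p := orderOf_eq_prime hαp hα1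
  -- lift α to a unit
  have hαunit : IsUnit α := by
    exact IsUnit.of_pow_eq_one hαp hp.ne_zero
  obtain ⟨a, ha⟩ := hαunit
  have horda : orderOf a = p := by rw [← orderOf_units, ha, hordα]
  -- cardinality
  set d := q.natDegree with hd
  have hcard : Fintype.card F = 2 ^ d := by
    have := Module.card_eq_pow_finrank (K := ZMod 2) (V := F)
    rw [this, ZMod.card 2]
    congr 1
    rw [(AdjoinRoot.powerBasis hqirr.ne_zero).finrank, AdjoinRoot.powerBasis_dim, hd]
  have hcardu : Fintype.card Fˣ = 2 ^ d - 1 := by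
    rw [Fintype.card_units, hcard]
  have hpdvd : p ∣ 2 ^ d - 1 := by
    rw [← horda, ← hcardu]
    exact orderOf_dvd_card
  -- hence 2^d = 1 in ZMod p
  have h2d : (2 : ZMod p) ^ d = 1 := by
    have h1le : 1 ≤ 2 ^ d := Nat.one_le_two_pow
    have : (2 ^ d : ℕ) ≡ 1 [MOD p] := ((Nat.modEq_iff_dvd' h1le).mpr hpdvd).symm
    have := (ZMod.natCast_eq_natCast_iff _ _ _).mpr this
    push_cast at this
    exact this
  have hud : u ^ d = 1 := by
    ext
    push_cast
    rw [hu, h2d]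
  have hdvd : p - 1 ∣ d := hord ▸ orderOf_dvd_of_pow_eq_one hud
  have hdpos : 0 < d := hqirr.natDegree_pos
  have hdle : d ≤ p - 1 := by
    rw [← hdeg]
    exact natDegree_le_of_dvd hqdvd hgmonic.ne_zero
  have hdeq : d = p - 1 := Nat.le_antisymm hdle (Nat.le_of_dvd hdpos hdvd)
  -- conclude q = g
  obtain ⟨c, hc⟩ := hqdvd
  have hcne : c ≠ 0 := by
    rintro rfl
    rw [mul_zero] at hc
    exact hgmonic.ne_zero hc
  have hcdeg : c.natDegree = 0 := by
    have := natDegree_mul hqirr.ne_zero hcne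
    rw [← hc, hdeg, ← hd, hdeq] at this
    omega
  have hclead : c.leadingCoeff = 1 := by
    have h2 := leadingCoeff_mul q c
    rw [← hc, hgmonic.leadingCoeff, hqmonic.leadingCoeff, one_mul] at h2
    exact h2.symm
  have hc1 : c = 1 := eq_one_of_monic_natDegree_zero hclead hcdeg
  rw [hc, hc1, mul_one]
  exact hqirr

/-- If `n + 1` is prime and `2` is a primitive root modulo `n + 1` (i.e. `2` generates the
multiplicative group `(ℤ/(n+1))ˣ`), then every polynomial
`z^n + ξ_{n-1} z^{n-1} + ⋯ + ξ_0` with coefficients `ξ_j ∈ {1, -1}` is irreducible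
over `ℚ`. -/
theorem pm_one_irreducible (n : ℕ) (hn : 1 ≤ n) (hprime : Nat.Prime (n + 1))
    (hgen : ∃ g : (ZMod (n + 1))ˣ, ((g : ZMod (n + 1)) = 2) ∧
      ∀ u : (ZMod (n + 1))ˣ, u ∈ Subgroup.zpowers g)
    (ξ : ℕ → ℤ) (hξ : ∀ j < n, ξ j = 1 ∨ ξ j = -1) :
    Irreducible
      ((Polynomial.X ^ n +
          ∑ j ∈ Finset.range n, Polynomial.C (ξ j) * Polynomial.X ^ j).map
        (Int.castRingHom ℚ)) := by
  obtain ⟨g2, hg2, hgenall⟩ := hgen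
  haveI : Fact (Nat.Prime (n + 1)) := ⟨hprime⟩
  have hp2 : n + 1 ≠ 2 := by
    intro h
    have hn1 : n = 1 := by omega
    subst hn1
    have h0 : (g2 : ZMod 2) ≠ 0 := g2.ne_zero
    rw [hg2] at h0
    exact h0 (by rfl)
  have hord : orderOf g2 = (n + 1) - 1 := by
    rw [orderOf_eq_card_of_forall_mem_zpowers hgenall, Nat.card_eq_fintype_card,
      ZMod.card_units_eq_totient,
      Nat.totient_prime hprime]
  set f : ℤ[X] := X ^ n + ∑ j ∈ Finset.range n, C (ξ j) * X ^ j with hf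
  have hsumdeg : (∑ j ∈ Finset.range n, C (ξ j) * X ^ j : ℤ[X]).degree < n := by
    apply lt_of_le_of_lt (degree_sum_le _ _)
    rw [Finset.sup_lt_iff (by exact_mod_cast WithBot.bot_lt_coe n)]
    intro j hj
    refine lt_of_le_of_lt (degree_C_mul_X_pow_le _ _) ?_
    exact_mod_cast Finset.mem_range.mp hj
  have hmonic : f.Monic := monic_X_pow_add hsumdeg
  have hmap2 : f.map (Int.castRingHom (ZMod 2)) =
      ∑ i ∈ Finset.range (n + 1), (X : (ZMod 2)[X]) ^ i := by
    rw [hf, Polynomial.map_add, Polynomial.map_pow, map_X, Polynomial.map_sum,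
      Finset.sum_range_succ, add_comm]
    congr 1
    apply Finset.sum_congr rfl
    intro j hj
    rw [Polynomial.map_mul, Polynomial.map_pow, map_X, map_C]
    have h1 : ((Int.castRingHom (ZMod 2)) (ξ j)) = 1 := by
      rcases hξ j (Finset.mem_range.mp hj) with h | h <;> rw [h] <;> decide
    rw [h1, map_one, one_mul]
  have hirr2 : Irreducible (f.map (Int.castRingHom (ZMod 2))) := by
    rw [hmap2]
    exact geom_irred (n + 1) hprime hp2 g2 hord hg2
  have hirrZ : Irreducible f :=
    hmonic.irreducible_of_irreducible_map (Int.castRingHom (ZMod 2)) f hirr2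
  have : Int.castRingHom ℚ = algebraMap ℤ ℚ := rfl
  rw [this]
  exact (hmonic.irreducible_iff_irreducible_map_fraction_map (K := ℚ)).mp hirrZ
end
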